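/- Let f be a density in 𝓛₀ and let F be the probability measure on [0,∞) with density f, i.e., F(A) = ∫_A f(y) dy. Then for every d > 0, F((x, x+d]) ~ d·f(x) as x → ∞, i.e., F((x, x+d])/(d f(x)) → 1. -/

import Mathlib

open MeasureTheory Filter Set

noncomputable section

/-- A probability density supported on `[0, ∞)`. -/
def IsDensity (f : ℝ → ℝ) : Prop :=
  Measurable f ∧ (∀ x < (0:ℝ), f x = 0) ∧ (∀ x : ℝ, 0 ≤ f x) ∧
    ∫ y in Set.Ioi (0:ℝ), f y = 1

/-- The long-tailed density class `𝓛₀`. -/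
def LongTailedDensity (f : ℝ → ℝ) : Prop :=
  (∀ᶠ x in atTop, 0 < f x) ∧
  ∀ t : ℝ, Tendsto (fun x => f (x + t) / f x) atTop (nhds 1)

/-- The subexponential density class `𝓢₀`. -/
def SubexpDensity (f : ℝ → ℝ) : Prop :=
  LongTailedDensity f ∧
  Tendsto (fun x => (∫ y in (0:ℝ)..x, f (x - y) * f y) / f x) atTop (nhds 2)

/-- The local mass `F((x, x+d])` of a measure, as a real number. -/
def locMass (F : Measure ℝ) (d x : ℝ) : ℝ := (F (Set.Ioc x (x + d))).toReal

/-- `F ∈ 𝓛_{Δ_d}`. -/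
def MemLdelta (F : Measure ℝ) (d : ℝ) : Prop :=
  (∀ᶠ x in atTop, 0 < locMass F d x) ∧
  ∀ t > (0:ℝ), ∀ ε > (0:ℝ), ∀ᶠ x in atTop, ∀ s : ℝ, |s| ≤ t →
    |locMass F d (x + s) / locMass F d x - 1| ≤ ε

/-- Convolution of two measures on `ℝ`: the law of the sum of two
independent random variables with laws `F` and `G`. -/
def mconv (F G : Measure ℝ) : Measure ℝ :=
  Measure.map (fun p : ℝ × ℝ => p.1 + p.2) (F.prod G)

/-- `F ∈ 𝓢_{Δ_d}`. -/
def MemSdelta (F : Measure ℝ) (d : ℝ) : Prop :=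
  MemLdelta F d ∧
  Tendsto (fun x => locMass (mconv F F) d x / locMass F d x) atTop (nhds 2)

/-- The probability measure on `[0,∞)` with density `f`. -/
def densMeasure (f : ℝ → ℝ) : Measure ℝ :=
  volume.withDensity (fun y => ENNReal.ofReal (f y))

lemma ratio_sandwich {p q r δ ε : ℝ} (hq : 0 < q) (hr : 0 < r)
    (hδ : 0 ≤ δ) (h3e : 3*δ ≤ ε) (h31 : 3*δ ≤ 1)
    (h1 : |p/q - 1| ≤ δ) (h2 : |p/r - 1| ≤ δ) : |r/q - 1| ≤ ε := by
  rw [abs_le] at h1 h2 ⊢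
  have hεδ : 0 ≤ ε - 3*δ := by linarith
  have hpq1 : p ≤ (1+δ)*q := by
    have := h1.2; rw [sub_le_iff_le_add, div_le_iff₀ hq] at this; nlinarith
  have hpq2 : (1-δ)*q ≤ p := by
    have : (1:ℝ) - δ ≤ p / q := by linarith [h1.1]
    exact (le_div_iff₀ hq).1 this
  have hpr1 : p ≤ (1+δ)*r := by
    have := h2.2; rw [sub_le_iff_le_add, div_le_iff₀ hr] at this; nlinarith
  have hpr2 : (1-δ)*r ≤ p := by
    have : (1:ℝ) - δ ≤ p / r := by linarith [h2.1]
    exact (le_div_iff₀ hr).1 this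
  constructor
  · have h : (1-ε)*q ≤ r := by
      nlinarith [mul_nonneg hεδ hδ, mul_nonneg (mul_nonneg hεδ hδ) hq.le,
        mul_nonneg hδ hq.le, mul_nonneg (mul_nonneg hδ hδ) hq.le]
    have := (le_div_iff₀ hq).2 h
    linarith
  · have h : r ≤ (1+ε)*q := by
      nlinarith [mul_nonneg hεδ hq.le, mul_nonneg (mul_nonneg hεδ hδ) hq.le,
        mul_nonneg hδ hq.le, mul_nonneg (mul_nonneg hδ hδ) hq.le,
        mul_nonneg hδ hr.le]
    have := (div_le_iff₀ hq).2 h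
    linarith

lemma bad_small (f : ℝ → ℝ) (hm : Measurable f)
    (hL : ∀ t : ℝ, Tendsto (fun x => f (x + t) / f x) atTop (nhds 1))
    (y : ℕ → ℝ) (hy : Tendsto y atTop atTop) {δ : ℝ} (hδ : 0 < δ)
    (a b : ℝ) {c : ENNReal} (hc : 0 < c) :
    ∀ᶠ n in atTop, volume (Icc a b \ {s | ∀ m, n ≤ m → |f (y m + s) / f (y m) - 1| ≤ δ}) < c := by
  set G : ℕ → Set ℝ := fun n => {s | ∀ m, n ≤ m → |f (y m + s) / f (y m) - 1| ≤ δ} with hG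
  have hGmeas : ∀ n, MeasurableSet (G n) := by
    intro n
    have : G n = ⋂ m, ⋂ (_ : n ≤ m), {s | |f (y m + s) / f (y m) - 1| ≤ δ} := by
      ext s; simp [hG, Set.mem_iInter]
    rw [this]
    refine MeasurableSet.iInter fun m => MeasurableSet.iInter fun _ => ?_
    exact measurableSet_le
      ((((hm.comp (measurable_id.const_add (y m))).div_const _).sub_const 1).abs)
      measurable_const
  set S : ℕ → Set ℝ := fun n => Icc a b \ G n with hS
  have hmono : Antitone S := by
    intro n n' h
    refine Set.diff_subset_diff_right fun s hs m hm' => hs m (le_trans h hm')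
  have hempty : ⋂ n, S n = ∅ := by
    refine Set.eq_empty_iff_forall_notMem.2 fun s hs => ?_
    have htend : Tendsto (fun m => f (y m + s) / f (y m)) atTop (nhds 1) := (hL s).comp hy
    have hev : ∀ᶠ m in atTop, |f (y m + s) / f (y m) - 1| ≤ δ := by
      filter_upwards [Metric.tendsto_nhds.1 htend δ hδ] with m hm'
      rw [Real.dist_eq] at hm'; exact hm'.le
    obtain ⟨N, hN⟩ := eventually_atTop.1 hev
    exact ((Set.mem_iInter.1 hs N).2) (fun m hm' => hN m hm')
  have hfin : volume (S 0) ≠ ⊤ :=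
    (lt_of_le_of_lt (measure_mono Set.diff_subset) measure_Icc_lt_top).ne
  have := tendsto_measure_iInter_atTop
    (fun n => ((measurableSet_Icc.diff (hGmeas n)).nullMeasurableSet)) hmono ⟨0, hfin⟩
  rw [hempty, measure_empty] at this
  exact this.eventually_lt_const hc

lemma uct (f : ℝ → ℝ) (hm : Measurable f) (hpos : ∀ᶠ x in atTop, 0 < f x)
    (hL : ∀ t : ℝ, Tendsto (fun x => f (x + t) / f x) atTop (nhds 1))
    {d ε : ℝ} (hd : 0 < d) (hε : 0 < ε) :
    ∀ᶠ x in atTop, ∀ t ∈ Icc (0:ℝ) d, |f (x + t) / f x - 1| ≤ ε := by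
  by_contra hcon
  rw [Filter.not_eventually] at hcon
  have hfreq : ∀ a : ℝ, ∃ x ≥ a, ∃ t ∈ Icc (0:ℝ) d, ε < |f (x + t) / f x - 1| := by
    intro a
    obtain ⟨x, hx, hx2⟩ := Filter.frequently_atTop.1 hcon a
    push_neg at hx2
    obtain ⟨t, ht, ht2⟩ := hx2
    exact ⟨x, hx, t, ht, ht2⟩
  choose x hxge t ht hbad using fun n : ℕ => hfreq n
  have hxa : Tendsto x atTop atTop :=
    tendsto_atTop_mono hxge tendsto_natCast_atTop_atTop
  have htnn : ∀ n, 0 ≤ t n := fun n => (ht n).1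
  have htd : ∀ n, t n ≤ d := fun n => (ht n).2
  have hxta : Tendsto (fun n => x n + t n) atTop atTop :=
    tendsto_atTop_mono (fun n => le_add_of_nonneg_right (htnn n)) hxa
  set δ := min ε 1 / 3 with hδdef
  have hδ : 0 < δ := by positivity
  have h3e : 3 * δ ≤ ε := by
    rw [hδdef]; rw [mul_div_cancel₀]; exact min_le_left _ _; norm_num
  have h31 : 3 * δ ≤ 1 := by
    rw [hδdef]; rw [mul_div_cancel₀]; exact min_le_right _ _; norm_num
  obtain ⟨X, hX⟩ := eventually_atTop.1 hpos
  have hc4 : (0:ENNReal) < ENNReal.ofReal (d/4) := ENNReal.ofReal_pos.2 (by positivity)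
  have hev := (bad_small f hm hL x hxa hδ 0 (2*d) hc4).and
    ((bad_small f hm hL (fun n => x n + t n) hxta hδ (-d) d hc4).and
      (hxa.eventually_ge_atTop X))
  obtain ⟨n, hA', hC', hXx⟩ := hev.exists
  set G1 := {s | ∀ m, n ≤ m → |f (x m + s) / f (x m) - 1| ≤ δ} with hG1
  set G2 := {s | ∀ m, n ≤ m → |f (x m + t m + s) / f (x m + t m) - 1| ≤ δ} with hG2
  have hG2meas : MeasurableSet G2 := by
    have : G2 = ⋂ m, ⋂ (_ : n ≤ m), {s | |f (x m + t m + s) / f (x m + t m) - 1| ≤ δ} := by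
      ext s; simp [hG2, Set.mem_iInter]
    rw [this]
    refine MeasurableSet.iInter fun m => MeasurableSet.iInter fun _ => ?_
    exact measurableSet_le
      ((((hm.comp (measurable_id.const_add (x m + t m))).div_const _).sub_const 1).abs)
      measurable_const
  set A := Icc (0:ℝ) (2*d) ∩ G1 with hA
  set C := (fun u => u + (-(t n))) ⁻¹' (Icc (-d) d ∩ G2) with hC
  -- measure lower bounds
  have hAfin : volume A ≠ ⊤ :=
    (lt_of_le_of_lt (measure_mono Set.inter_subset_left) measure_Icc_lt_top).ne
  have key : ∀ (I B : Set ℝ) (r : ℝ), volume I = ENNReal.ofReal r → volume I ≠ ⊤ →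
      volume (I \ B) < ENNReal.ofReal (d/4) → 0 ≤ r →
      r - d/4 < (volume (I ∩ B)).toReal := by
    intro I B r hI hIfin hbad hr
    have h1 : volume I ≤ volume (I ∩ B) + volume (I \ B) := by
      refine le_trans (measure_mono ?_) (measure_union_le _ _)
      intro u hu
      by_cases h : u ∈ B
      · exact Or.inl ⟨hu, h⟩
      · exact Or.inr ⟨hu, h⟩
    have hIBfin : volume (I ∩ B) ≠ ⊤ :=
      (lt_of_le_of_lt (measure_mono Set.inter_subset_left) hIfin.lt_top).ne
    have hbadfin : volume (I \ B) ≠ ⊤ :=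
      (lt_of_le_of_lt (measure_mono Set.diff_subset) hIfin.lt_top).ne
    have h2 : r ≤ (volume (I ∩ B)).toReal + (volume (I \ B)).toReal := by
      have h2' := (ENNReal.toReal_le_toReal hIfin
        (ENNReal.add_ne_top.2 ⟨hIBfin, hbadfin⟩)).2 h1
      rwa [hI, ENNReal.toReal_ofReal hr, ENNReal.toReal_add hIBfin hbadfin] at h2'
    have h3 : (volume (I \ B)).toReal < d/4 := by
      have := (ENNReal.toReal_lt_toReal hbadfin ENNReal.ofReal_ne_top).2 hbad
      rwa [ENNReal.toReal_ofReal (by positivity : (0:ℝ) ≤ d/4)] at this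
    linarith
  have hAvol : 2*d - d/4 < (volume A).toReal := by
    have := key (Icc (0:ℝ) (2*d)) G1 (2*d) (by rw [Real.volume_Icc]; norm_num)
      measure_Icc_lt_top.ne hA' (by positivity)
    exact this
  have hCvol : 2*d - d/4 < (volume C).toReal := by
    have hpre : volume C = volume (Icc (-d) d ∩ G2) :=
      measure_preimage_add_right volume (-(t n)) _
    have := key (Icc (-d) d) G2 (2*d) (by rw [Real.volume_Icc]; ring_nf)
      measure_Icc_lt_top.ne hC' (by positivity)
    rw [hpre]
    exact this
  -- A and C intersect
  have hsub : A ∪ C ⊆ Icc (-d) (2*d) := by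
    rintro u (hu | hu)
    · exact ⟨by linarith [hu.1.1], hu.1.2⟩
    · obtain ⟨h1, _⟩ := hu
      simp only [Set.mem_Icc] at h1
      constructor <;> [linarith [h1.1, htnn n]; linarith [h1.2, htd n]]
  have hne : (A ∩ C).Nonempty := by
    by_contra h
    rw [Set.not_nonempty_iff_eq_empty] at h
    have hCmeas : MeasurableSet C :=
      (measurableSet_Icc.inter hG2meas).preimage (measurable_add_const _)
    have hUn : volume (A ∪ C) = volume A + volume C :=
      measure_union (Set.disjoint_iff_inter_eq_empty.2 h) hCmeas
    have hCfin : volume C ≠ ⊤ := by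
      rw [measure_preimage_add_right]
      exact (lt_of_le_of_lt (measure_mono Set.inter_subset_left) measure_Icc_lt_top).ne
    have hle : (volume (A ∪ C)).toReal ≤ 3*d := by
      have h1 := ENNReal.toReal_le_toReal
        (by rw [hUn]; exact ENNReal.add_ne_top.2 ⟨hAfin, hCfin⟩)
        (measure_Icc_lt_top (a := -d) (b := 2*d)).ne |>.2 (measure_mono hsub)
      rw [Real.volume_Icc] at h1
      rw [ENNReal.toReal_ofReal (by linarith : (0:ℝ) ≤ 2*d - -d)] at h1
      linarith
    rw [hUn, ENNReal.toReal_add hAfin hCfin] at hle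
    linarith
  obtain ⟨u, huA, huC⟩ := hne
  have h1 : |f (x n + u) / f (x n) - 1| ≤ δ := huA.2 n le_rfl
  have h2' : |f (x n + t n + (u + -(t n))) / f (x n + t n) - 1| ≤ δ := huC.2 n le_rfl
  have harg : x n + t n + (u + -(t n)) = x n + u := by ring
  rw [harg] at h2'
  have hq : 0 < f (x n) := hX _ (hXx)
  have hr : 0 < f (x n + t n) := hX _ (by linarith [hXx, htnn n])
  have := ratio_sandwich hq hr hδ.le h3e h31 h1 h2'
  exact absurd this (not_le.2 (hbad n))

theorem local_mass_asymptotic_of_long_tailed_density (f : ℝ → ℝ)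
    (hf : IsDensity f) (hL : LongTailedDensity f) :
    ∀ d > (0:ℝ),
      Tendsto (fun x => locMass (densMeasure f) d x / (d * f x)) atTop (nhds 1) := by
  obtain ⟨hm, hzero, hnn, hint⟩ := hf
  obtain ⟨hpos, hlt⟩ := hL
  intro d hd
  -- locMass as a set integral
  have hloc : ∀ x : ℝ, locMass (densMeasure f) d x = ∫ y in Ioc x (x+d), f y := by
    intro x
    rw [locMass, densMeasure, withDensity_apply _ measurableSet_Ioc,
      integral_eq_lintegral_of_nonneg_ae (ae_of_all _ fun y => hnn y)
        hm.aestronglyMeasurable]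
  -- integrability
  have hInt : IntegrableOn f (Ioi (0:ℝ)) := by
    by_contra h
    rw [MeasureTheory.integral_undef h] at hint
    norm_num at hint
  rw [Metric.tendsto_nhds]
  intro ε hε
  have hε2 : 0 < ε/2 := by positivity
  filter_upwards [uct f hm hpos hlt hd hε2, hpos, eventually_ge_atTop (0:ℝ)]
    with x hu hfx hx0
  have hsub : Ioc x (x+d) ⊆ Ioi (0:ℝ) := fun y hy => lt_of_le_of_lt hx0 hy.1
  have hIx : IntegrableOn f (Ioc x (x+d)) := hInt.mono_set hsub
  have hvol : (volume (Ioc x (x+d))).toReal = d := by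
    rw [Real.volume_Ioc, ENNReal.toReal_ofReal (by linarith)]
    ring
  have hbound : ∀ y ∈ Ioc x (x+d),
      (1 - ε/2) * f x ≤ f y ∧ f y ≤ (1 + ε/2) * f x := by
    intro y hy
    have hty : y - x ∈ Icc (0:ℝ) d := ⟨by linarith [hy.1], by linarith [hy.2]⟩
    have := hu (y - x) hty
    rw [show x + (y - x) = y by ring, abs_le] at this
    constructor
    · have : 1 - ε/2 ≤ f y / f x := by linarith [this.1]
      exact (le_div_iff₀ hfx).1 this
    · have : f y / f x ≤ 1 + ε/2 := by linarith [this.2]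
      exact (div_le_iff₀ hfx).1 this
  have hup : ∫ y in Ioc x (x+d), f y ≤ d * ((1 + ε/2) * f x) := by
    have := setIntegral_mono_on hIx
      (integrableOn_const measure_Ioc_lt_top.ne) measurableSet_Ioc
      (fun y hy => (hbound y hy).2)
    rwa [setIntegral_const, smul_eq_mul, measureReal_def, hvol] at this
  have hlo : d * ((1 - ε/2) * f x) ≤ ∫ y in Ioc x (x+d), f y := by
    have := setIntegral_mono_on
      (integrableOn_const measure_Ioc_lt_top.ne) hIx measurableSet_Ioc
      (fun y hy => (hbound y hy).1)
    rwa [setIntegral_const, smul_eq_mul, measureReal_def, hvol] at this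
  rw [Real.dist_eq, hloc x]
  have hdf : 0 < d * f x := mul_pos hd hfx
  have habs : |(∫ y in Ioc x (x+d), f y) / (d * f x) - 1| ≤ ε/2 := by
    rw [abs_le]
    constructor
    · have h := (le_div_iff₀ hdf).2 (show (1 - ε/2) * (d * f x) ≤ _ by
        calc (1 - ε/2) * (d * f x) = d * ((1 - ε/2) * f x) := by ring
        _ ≤ _ := hlo)
      linarith
    · have h := (div_le_iff₀ hdf).2 (show (∫ y in Ioc x (x+d), f y) ≤ (1 + ε/2) * (d * f x) by
        calc _ ≤ d * ((1 + ε/2) * f x) := hup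
        _ = (1 + ε/2) * (d * f x) := by ring)
      linarith
  linarith [habs]
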